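/- Let f : ℝⁿ → ℝ ∪ {±∞} be a proper closed convex function. The mapping Ψ defined on subsets of ℝⁿ × ℝ by Ψ(F*) := ⋂_{(u, f*(u)) ∈ F*} {(x, f(x)) ∈ ℝⁿ × ℝ : u ∈ ∂f(x)} is an inclusion-reversing one-to-one mapping between the collection of K-minimal exposed faces of epi f* and the collection of K-minimal exposed faces of epi f; its inverse is Ψ*(F) := ⋂_{(x, f(x)) ∈ F} {(u, f*(u)) ∈ ℝⁿ × ℝ : u ∈ ∂f(x)}. In particular, for every K-minimal exposed face F* of epi f*, Ψ(F*) is a K-minimal exposed face of epi f and Ψ*(Ψ(F*)) = F*; for every K-minimal exposed face F of epi f, Ψ*(F) is a K-minimal exposed face of epi f* and Ψ(Ψ*(F)) = F; and F₁* ⊆ F₂* implies Ψ(F₂*) ⊆ Ψ(F₁*). -/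

import Mathlib

open Matrix Set
open scoped Pointwise

noncomputable section

/-- The epigraph of an extended-real-valued function on ℝⁿ. -/
def epi (n : ℕ) (f : (Fin n → ℝ) → EReal) : Set ((Fin n → ℝ) × ℝ) :=
  {p | f p.1 ≤ (p.2 : EReal)}

/-- The Legendre–Fenchel conjugate f*(u) = sup_x (⟨x,u⟩ − f(x)). -/
def conj (n : ℕ) (f : (Fin n → ℝ) → EReal) (u : Fin n → ℝ) : EReal :=
  ⨆ x : Fin n → ℝ, (((x ⬝ᵥ u : ℝ) : EReal) - f x)

/-- The subdifferential ∂g(x₀) = {u : ∀x, g(x) ≥ g(x₀) + ⟨u, x − x₀⟩}. -/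
def subdiff (n : ℕ) (g : (Fin n → ℝ) → EReal) (x₀ : Fin n → ℝ) : Set (Fin n → ℝ) :=
  {u | ∀ x : Fin n → ℝ, g x₀ + ((u ⬝ᵥ (x - x₀) : ℝ) : EReal) ≤ g x}

/-- The ordering cone K = {0}ⁿ × [0,∞) in ℝⁿ × ℝ. -/
def Kcone (n : ℕ) : Set ((Fin n → ℝ) × ℝ) := {p | p.1 = 0 ∧ 0 ≤ p.2}

/-- y is K-minimal in A : ({y} − (K \ (−K))) ∩ A = ∅. -/
def KMinPt (n : ℕ) (A : Set ((Fin n → ℝ) × ℝ)) (y : (Fin n → ℝ) × ℝ) : Prop :=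
  ({y} - (Kcone n \ (-Kcone n))) ∩ A = ∅

/-- The hyperplane H(u,s,α) = {(x,r) : ⟨x,u⟩ + r·s = α} in ℝⁿ × ℝ. -/
def Hyp (n : ℕ) (u : Fin n → ℝ) (s α : ℝ) : Set ((Fin n → ℝ) × ℝ) :=
  {p | p.1 ⬝ᵥ u + p.2 * s = α}

/-- H(u,s,α) is a supporting hyperplane to A. -/
def IsSuppHyp (n : ℕ) (A : Set ((Fin n → ℝ) × ℝ)) (u : Fin n → ℝ) (s α : ℝ) : Prop :=
  (u, s) ≠ 0 ∧ (Hyp n u s α ∩ A).Nonempty ∧ ∀ p ∈ A, p.1 ⬝ᵥ u + p.2 * s ≤ α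

/-- E is an exposed face of A: E = H ∩ A for some supporting hyperplane H of A. -/
def IsExpFace (n : ℕ) (A E : Set ((Fin n → ℝ) × ℝ)) : Prop :=
  ∃ (u : Fin n → ℝ) (s α : ℝ), IsSuppHyp n A u s α ∧ E = Hyp n u s α ∩ A

/-- E is a K-minimal exposed face of A: an exposed face all of whose points are
K-minimal in A. -/
def IsKMinExpFace (n : ℕ) (A E : Set ((Fin n → ℝ) × ℝ)) : Prop :=
  IsExpFace n A E ∧ ∀ y ∈ E, KMinPt n A y

/-- The duality map Ψ(F*) := ⋂_{(u,f*(u)) ∈ F*} {(x,f(x)) : u ∈ ∂f(x)}. -/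
def Psi (n : ℕ) (f : (Fin n → ℝ) → EReal) (Fs : Set ((Fin n → ℝ) × ℝ)) :
    Set ((Fin n → ℝ) × ℝ) :=
  ⋂ q ∈ {q ∈ Fs | (q.2 : EReal) = conj n f q.1},
    {p | (p.2 : EReal) = f p.1 ∧ q.1 ∈ subdiff n f p.1}

/-- The inverse duality map Ψ*(F) := ⋂_{(x,f(x)) ∈ F} {(u,f*(u)) : u ∈ ∂f(x)}. -/
def PsiStar (n : ℕ) (f : (Fin n → ℝ) → EReal) (F : Set ((Fin n → ℝ) × ℝ)) :
    Set ((Fin n → ℝ) × ℝ) :=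
  ⋂ p ∈ {p ∈ F | (p.2 : EReal) = f p.1},
    {q | (q.2 : EReal) = conj n f q.1 ∧ q.1 ∈ subdiff n f p.1}

namespace Stmt5Aux

variable {n : ℕ}

lemma ereal_cases (a : EReal) : a = ⊥ ∨ (∃ r : ℝ, a = (r : EReal)) ∨ a = ⊤ := by
  induction a using EReal.rec with
  | bot => exact Or.inl rfl
  | coe r => exact Or.inr (Or.inl ⟨r, rfl⟩)
  | top => exact Or.inr (Or.inr rfl)

lemma ereal_real {a : EReal} (hb : a ≠ ⊥) (ht : a ≠ ⊤) : ∃ r : ℝ, a = (r : EReal) :=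
  ⟨a.toReal, (EReal.coe_toReal ht hb).symm⟩

lemma kmin_iff {A : Set ((Fin n → ℝ) × ℝ)} {y : (Fin n → ℝ) × ℝ} :
    KMinPt n A y ↔ ∀ t : ℝ, 0 < t → (y.1, y.2 - t) ∉ A := by
  unfold KMinPt
  rw [Set.eq_empty_iff_forall_notMem]
  constructor
  · intro h t ht hmem
    refine h (y.1, y.2 - t) ⟨?_, hmem⟩
    rw [Set.mem_sub]
    refine ⟨y, rfl, ((0 : Fin n → ℝ), t), ⟨⟨rfl, ht.le⟩, ?_⟩, ?_⟩
    · rw [Set.mem_neg]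
      rintro ⟨-, h2⟩
      simp only [Prod.snd_neg] at h2
      linarith
    · apply Prod.ext <;> simp
  · rintro h z ⟨hz1, hz2⟩
    rw [Set.mem_sub] at hz1
    obtain ⟨a, ha, b, hb, hab⟩ := hz1
    rw [Set.mem_singleton_iff] at ha
    obtain ⟨⟨hb1, hb2⟩, hb3⟩ := hb
    have hbt : 0 < b.2 := by
      by_contra hle
      push_neg at hle
      exact hb3 (Set.mem_neg.2 ⟨by simp [hb1], by simpa using hle⟩)
    apply h b.2 hbt
    have hz : z = (y.1, y.2 - b.2) := by
      rw [← hab, ha]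
      apply Prod.ext <;> simp [hb1]
    rwa [← hz]

lemma le_conj (g : (Fin n → ℝ) → EReal) (x u : Fin n → ℝ) :
    ((x ⬝ᵥ u : ℝ) : EReal) - g x ≤ conj n g u :=
  le_iSup (fun x' => ((x' ⬝ᵥ u : ℝ) : EReal) - g x') x

lemma FY {g : (Fin n → ℝ) → EReal} {x : Fin n → ℝ} {r : ℝ} (hx : g x = (r : EReal))
    (u : Fin n → ℝ) : ((x ⬝ᵥ u - r : ℝ) : EReal) ≤ conj n g u := by
  have h := le_conj (n := n) g x u
  rwa [hx, ← EReal.coe_sub] at h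

lemma conj_eq_of_subdiff {g : (Fin n → ℝ) → EReal} {x u : Fin n → ℝ} {r : ℝ}
    (hx : g x = (r : EReal)) (hu : u ∈ subdiff n g x) :
    conj n g u = ((x ⬝ᵥ u - r : ℝ) : EReal) := by
  refine le_antisymm (iSup_le fun x' => ?_) (FY hx u)
  have h := hu x'
  rw [hx, ← EReal.coe_add] at h
  calc ((x' ⬝ᵥ u : ℝ) : EReal) - g x'
      ≤ ((x' ⬝ᵥ u : ℝ) : EReal) - ((r + u ⬝ᵥ (x' - x) : ℝ) : EReal) :=
        EReal.sub_le_sub le_rfl h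
    _ = ((x' ⬝ᵥ u - (r + u ⬝ᵥ (x' - x)) : ℝ) : EReal) := (EReal.coe_sub _ _).symm
    _ = ((x ⬝ᵥ u - r : ℝ) : EReal) := by
        congr 1
        rw [dotProduct_sub, dotProduct_comm u x', dotProduct_comm u x]
        ring

lemma subdiff_of_conj_eq {g : (Fin n → ℝ) → EReal} {x u : Fin n → ℝ} {r : ℝ}
    (hx : g x = (r : EReal)) (h : conj n g u = ((x ⬝ᵥ u - r : ℝ) : EReal)) :
    u ∈ subdiff n g x := by
  intro x'
  rw [hx, ← EReal.coe_add]
  rcases ereal_cases (g x') with hgx | ⟨r', hgx⟩ | hgx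
  · exfalso
    have hle := le_conj (n := n) g x' u
    rw [hgx, h, EReal.coe_sub_bot] at hle
    exact absurd (top_le_iff.1 hle) (EReal.coe_ne_top _)
  · have hle := le_conj (n := n) g x' u
    rw [hgx, h, ← EReal.coe_sub] at hle
    rw [hgx, EReal.coe_le_coe_iff]
    rw [EReal.coe_le_coe_iff] at hle
    rw [dotProduct_sub, dotProduct_comm u x', dotProduct_comm u x] at *
    linarith
  · rw [hgx]; exact le_top

lemma subdiff_iff_conj {g : (Fin n → ℝ) → EReal} {x u : Fin n → ℝ} {r : ℝ}
    (hx : g x = (r : EReal)) :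
    u ∈ subdiff n g x ↔ conj n g u = ((x ⬝ᵥ u - r : ℝ) : EReal) :=
  ⟨conj_eq_of_subdiff hx, subdiff_of_conj_eq hx⟩

lemma conj_ne_bot {g : (Fin n → ℝ) → EReal} {x₁ : Fin n → ℝ} {r₁ : ℝ}
    (hx : g x₁ = (r₁ : EReal)) (u : Fin n → ℝ) : conj n g u ≠ ⊥ := by
  intro hc
  have h := FY hx u
  rw [hc] at h
  exact (EReal.coe_ne_bot _) (le_bot_iff.1 h)

lemma subdiff_convex {g : (Fin n → ℝ) → EReal} {x : Fin n → ℝ} {r : ℝ}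
    (hx : g x = (r : EReal)) : Convex ℝ (subdiff n g x) := by
  intro u hu v hv a b ha hb hab x'
  rw [hx, ← EReal.coe_add]
  rcases ereal_cases (g x') with hgx | ⟨r', hgx⟩ | hgx
  · have h1 := hu x'
    rw [hx, ← EReal.coe_add, hgx] at h1
    exact absurd (le_bot_iff.1 h1) (EReal.coe_ne_bot _)
  · have h1 := hu x'
    have h2 := hv x'
    rw [hx, ← EReal.coe_add, hgx] at h1 h2
    rw [hgx, EReal.coe_le_coe_iff]
    rw [EReal.coe_le_coe_iff] at h1 h2
    have he : (a • u + b • v) ⬝ᵥ (x' - x) = a * (u ⬝ᵥ (x' - x)) + b * (v ⬝ᵥ (x' - x)) := by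
      rw [add_dotProduct, smul_dotProduct, smul_dotProduct]
      simp [smul_eq_mul]
    rw [he]
    have h3 : a * r + b * r = r := by rw [← add_mul, hab, one_mul]
    have h4 : a * r' + b * r' = r' := by rw [← add_mul, hab, one_mul]
    linarith [mul_le_mul_of_nonneg_left h1 ha, mul_le_mul_of_nonneg_left h2 hb]
  · rw [hgx]; exact le_top

end Stmt5Aux

namespace Stmt5Aux

variable {n : ℕ}

lemma char {g : (Fin n → ℝ) → EReal} {E : Set ((Fin n → ℝ) × ℝ)} :
    IsKMinExpFace n (epi n g) E ↔
      ∃ (u x₀ : Fin n → ℝ) (r₀ : ℝ), g x₀ = (r₀ : EReal) ∧ u ∈ subdiff n g x₀ ∧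
        E = {p : (Fin n → ℝ) × ℝ | (p.2 : EReal) = g p.1 ∧ u ∈ subdiff n g p.1} := by
  constructor
  · rintro ⟨⟨w, s, α, ⟨hne, ⟨p₀, hp₀H, hp₀A⟩, hsupp⟩, hE⟩, hkmin⟩
    have hp₀H' : p₀.1 ⬝ᵥ w + p₀.2 * s = α := hp₀H
    have graph : ∀ p ∈ Hyp n w s α ∩ epi n g, (p.2 : EReal) = g p.1 := by
      intro p hp
      have hkm := kmin_iff.1 (hkmin p (hE ▸ hp))
      have hle : g p.1 ≤ (p.2 : EReal) := hp.2
      rcases ereal_cases (g p.1) with hg | ⟨r', hg⟩ | hg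
      · exact absurd (by simp only [epi, Set.mem_setOf_eq]; rw [hg]; exact bot_le)
          (hkm 1 one_pos)
      · rw [hg] at hle
        have hr := EReal.coe_le_coe_iff.1 hle
        rcases eq_or_lt_of_le hr with heq | hlt
        · rw [hg]; exact_mod_cast heq.symm
        · exfalso
          refine hkm (p.2 - r') (by linarith) ?_
          simp only [epi, Set.mem_setOf_eq]
          rw [hg]
          exact_mod_cast (by linarith : r' ≤ p.2 - (p.2 - r'))
      · rw [hg] at hle
        exact absurd (top_le_iff.1 hle) (EReal.coe_ne_top _)
    have hp₀g : (p₀.2 : EReal) = g p₀.1 := graph p₀ ⟨hp₀H, hp₀A⟩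
    have hs_nonpos : s ≤ 0 := by
      by_contra hs
      push_neg at hs
      set m := max 0 ((α - p₀.1 ⬝ᵥ w - p₀.2 * s + 1) / s) with hm
      have hm0 : 0 ≤ m := le_max_left _ _
      have hmem : (p₀.1, p₀.2 + m) ∈ epi n g := by
        simp only [epi, Set.mem_setOf_eq]
        rw [← hp₀g]
        exact_mod_cast (by linarith : p₀.2 ≤ p₀.2 + m)
      have h1 := hsupp _ hmem
      simp only at h1
      have h2 : (α - p₀.1 ⬝ᵥ w - p₀.2 * s + 1) / s * s ≤ m * s :=
        mul_le_mul_of_nonneg_right (le_max_right _ _) hs.le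
      rw [div_mul_cancel₀ _ (ne_of_gt hs)] at h2
      nlinarith
    have hs_ne : s ≠ 0 := by
      intro hs0
      have hy : (p₀.1, p₀.2 + 1) ∈ Hyp n w s α ∩ epi n g := by
        constructor
        · show p₀.1 ⬝ᵥ w + (p₀.2 + 1) * s = α
          rw [hs0]
          rw [hs0] at hp₀H'
          simpa using hp₀H'
        · show g p₀.1 ≤ ((p₀.2 + 1 : ℝ) : EReal)
          rw [← hp₀g]
          exact_mod_cast (by linarith : p₀.2 ≤ p₀.2 + 1)
      have hgr := graph _ hy
      rw [← hp₀g] at hgr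
      have := EReal.coe_eq_coe_iff.1 hgr
      simp only at this
      linarith
    have hs_neg : s < 0 := lt_of_le_of_ne hs_nonpos hs_ne
    set c : ℝ := -s with hc
    have hc0 : 0 < c := by rw [hc]; linarith
    have hcne : c ≠ 0 := ne_of_gt hc0
    set u : Fin n → ℝ := c⁻¹ • w with hu
    set α' : ℝ := α / c with hα'
    have hdot : ∀ y : Fin n → ℝ, y ⬝ᵥ u = c⁻¹ * (y ⬝ᵥ w) := fun y => by
      rw [hu, dotProduct_smul]; simp [smul_eq_mul]
    have hkey : ∀ d e : ℝ, (c⁻¹ * d - e) * c = d - e * c := by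
      intro d e; field_simp
    have htle : ∀ d e : ℝ, d + e * s ≤ α ↔ c⁻¹ * d - e ≤ α' := by
      intro d e
      have hec : e * c = -(e * s) := by rw [hc]; ring
      rw [hα', le_div_iff₀ hc0, hkey]
      constructor <;> intro h <;> linarith
    have hteq : ∀ d e : ℝ, d + e * s = α ↔ c⁻¹ * d - e = α' := by
      intro d e
      have hec : e * c = -(e * s) := by rw [hc]; ring
      rw [hα', eq_div_iff hcne, hkey]
      constructor <;> intro h <;> linarith
    have hsupp' : ∀ z ∈ epi n g, z.1 ⬝ᵥ u - z.2 ≤ α' := by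
      intro z hz
      rw [hdot]
      exact (htle _ _).1 (hsupp z hz)
    have hp₀' : p₀.1 ⬝ᵥ u - p₀.2 = α' := by
      rw [hdot]
      exact (hteq _ _).1 hp₀H'
    have hsub : ∀ q : (Fin n → ℝ) × ℝ, g q.1 = ((q.2 : ℝ) : EReal) →
        q.1 ⬝ᵥ u - q.2 = α' → u ∈ subdiff n g q.1 := by
      intro q hq hqα x'
      rcases ereal_cases (g x') with hg | ⟨r', hg⟩ | hg
      · exfalso
        have hmem : (x', x' ⬝ᵥ u - α' - 1) ∈ epi n g := by
          simp only [epi, Set.mem_setOf_eq]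
          rw [hg]; exact bot_le
        have := hsupp' _ hmem
        simp only at this
        linarith
      · have hmem : (x', r') ∈ epi n g := by
          simp only [epi, Set.mem_setOf_eq]
          rw [hg]
        have h2 := hsupp' _ hmem
        simp only at h2
        rw [hq, hg, ← EReal.coe_add, EReal.coe_le_coe_iff]
        rw [dotProduct_sub, dotProduct_comm u x', dotProduct_comm u q.1]
        linarith
      · rw [hg]; exact le_top
    refine ⟨u, p₀.1, p₀.2, hp₀g.symm, hsub p₀ hp₀g.symm hp₀', ?_⟩
    rw [hE]
    ext p
    simp only [Set.mem_inter_iff, Set.mem_setOf_eq]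
    constructor
    · intro hp
      have hpg := graph p hp
      have hpα : p.1 ⬝ᵥ u - p.2 = α' := by
        rw [hdot]
        exact (hteq _ _).1 hp.1
      exact ⟨hpg, hsub p hpg.symm hpα⟩
    · rintro ⟨hp1, hp2⟩
      have hepi : p ∈ epi n g := by
        show g p.1 ≤ (p.2 : EReal)
        rw [← hp1]
      refine ⟨?_, hepi⟩
      show p.1 ⬝ᵥ w + p.2 * s = α
      rw [hteq, ← hdot]
      refine le_antisymm (hsupp' p hepi) ?_
      have h3 := hp2 p₀.1
      rw [← hp1, ← hp₀g, ← EReal.coe_add, EReal.coe_le_coe_iff] at h3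
      rw [dotProduct_sub, dotProduct_comm u p₀.1, dotProduct_comm u p.1] at h3
      rw [← hp₀']
      linarith
  · rintro ⟨u, x₀, r₀, hx₀, hu, hE⟩
    set α : ℝ := x₀ ⬝ᵥ u - r₀ with hα
    constructor
    · refine ⟨u, -1, α, ⟨?_, ⟨(x₀, r₀), ?_, ?_⟩, ?_⟩, ?_⟩
      · intro hcon
        have h := congrArg Prod.snd hcon
        simp at h
      · show x₀ ⬝ᵥ u + r₀ * (-1) = α
        rw [hα]; ring
      · show g x₀ ≤ ((r₀ : ℝ) : EReal)
        rw [hx₀]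
      · intro p hp
        have h1 := hu p.1
        rw [hx₀, ← EReal.coe_add] at h1
        have h2 := EReal.coe_le_coe_iff.1 (le_trans h1 hp)
        show p.1 ⬝ᵥ u + p.2 * (-1) ≤ α
        rw [hα]
        rw [dotProduct_sub, dotProduct_comm u p.1, dotProduct_comm u x₀] at h2
        linarith
      · rw [hE]
        ext p
        simp only [Set.mem_inter_iff, Set.mem_setOf_eq]
        constructor
        · rintro ⟨hp1, hp2⟩
          refine ⟨?_, ?_⟩
          · show p.1 ⬝ᵥ u + p.2 * (-1) = α
            have h3 := hp2 x₀
            rw [hx₀, ← hp1, ← EReal.coe_add, EReal.coe_le_coe_iff] at h3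
            have h1 := hu p.1
            rw [hx₀, ← EReal.coe_add, ← hp1, EReal.coe_le_coe_iff] at h1
            rw [hα]
            rw [dotProduct_sub, dotProduct_comm u x₀, dotProduct_comm u p.1] at h3
            rw [dotProduct_sub, dotProduct_comm u p.1, dotProduct_comm u x₀] at h1
            linarith
          · show g p.1 ≤ (p.2 : EReal)
            rw [← hp1]
        · rintro ⟨hpH, hpE⟩
          have hpH' : p.1 ⬝ᵥ u - p.2 = α := by
            have : p.1 ⬝ᵥ u + p.2 * (-1) = α := hpH
            linarith
          have h1 := hu p.1
          rw [hx₀, ← EReal.coe_add] at h1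
          have hge : ((p.2 : ℝ) : EReal) ≤ g p.1 := by
            have he : r₀ + u ⬝ᵥ (p.1 - x₀) = p.2 := by
              rw [dotProduct_sub, dotProduct_comm u p.1, dotProduct_comm u x₀]
              rw [hα] at hpH'
              linarith
            rw [he] at h1
            exact h1
          have hgp : g p.1 = ((p.2 : ℝ) : EReal) := le_antisymm hpE hge
          refine ⟨hgp.symm, ?_⟩
          intro x'
          have h2 := hu x'
          rw [hx₀, ← EReal.coe_add] at h2
          rw [hgp, ← EReal.coe_add]
          refine le_trans ?_ h2
          rw [EReal.coe_le_coe_iff]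
          rw [hα] at hpH'
          rw [dotProduct_sub, dotProduct_sub, dotProduct_comm u x', dotProduct_comm u p.1,
            dotProduct_comm u x₀]
          linarith
    · intro y hy
      rw [hE] at hy
      obtain ⟨hy1, hy2⟩ := hy
      rw [kmin_iff]
      intro t ht hmem
      have hm : g y.1 ≤ ((y.2 - t : ℝ) : EReal) := hmem
      rw [← hy1, EReal.coe_le_coe_iff] at hm
      linarith

end Stmt5Aux

namespace Stmt5Aux

variable {n : ℕ}

lemma lin_decomp (ℓ : ((Fin n → ℝ) × ℝ) →L[ℝ] ℝ) :
    ∃ (v : Fin n → ℝ) (s : ℝ), ∀ p : (Fin n → ℝ) × ℝ, ℓ p = p.1 ⬝ᵥ v + p.2 * s := by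
  refine ⟨fun i => ℓ ((Pi.single i (1:ℝ) : Fin n → ℝ), (0:ℝ)), ℓ ((0 : Fin n → ℝ), (1:ℝ)), ?_⟩
  intro p
  have hsplit : p = ((p.1, (0:ℝ)) : (Fin n → ℝ) × ℝ) + ((0 : Fin n → ℝ), p.2) := by
    apply Prod.ext <;> simp
  have h0 : (∑ i : Fin n, Pi.single i (p.1 i)) = p.1 := Finset.univ_sum_single p.1
  have hfst : ((p.1, (0:ℝ)) : (Fin n → ℝ) × ℝ)
      = ∑ i : Fin n, ((Pi.single i (p.1 i) : Fin n → ℝ), (0:ℝ)) :=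
    calc ((p.1, (0:ℝ)) : (Fin n → ℝ) × ℝ) = LinearMap.inl ℝ (Fin n → ℝ) ℝ p.1 := rfl
      _ = LinearMap.inl ℝ (Fin n → ℝ) ℝ (∑ i : Fin n, Pi.single i (p.1 i)) := by rw [h0]
      _ = ∑ i : Fin n, LinearMap.inl ℝ (Fin n → ℝ) ℝ (Pi.single i (p.1 i)) := map_sum _ _ _
      _ = ∑ i : Fin n, ((Pi.single i (p.1 i) : Fin n → ℝ), (0:ℝ)) := rfl
  have hsm : ∀ i : Fin n, ((Pi.single i (p.1 i) : Fin n → ℝ), (0:ℝ))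
      = p.1 i • ((Pi.single i (1:ℝ) : Fin n → ℝ), (0:ℝ)) := by
    intro i
    rw [Prod.smul_mk, smul_zero]
    congr 1
    funext j
    by_cases hj : j = i
    · subst hj; simp
    · simp [Pi.single_eq_of_ne hj]
  have hsnd : ((0 : Fin n → ℝ), p.2) = p.2 • ((0 : Fin n → ℝ), (1:ℝ)) := by
    rw [Prod.smul_mk, smul_zero, smul_eq_mul, mul_one]
  conv_lhs => rw [hsplit]
  rw [map_add, hfst, map_sum]
  have hterm : ∀ i : Fin n, ℓ ((Pi.single i (p.1 i) : Fin n → ℝ), (0:ℝ))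
      = p.1 i * ℓ ((Pi.single i (1:ℝ) : Fin n → ℝ), (0:ℝ)) := by
    intro i
    rw [hsm i, ContinuousLinearMap.map_smul, smul_eq_mul]
  rw [Finset.sum_congr rfl fun i _ => hterm i]
  have hlast : ℓ ((0 : Fin n → ℝ), p.2) = p.2 * ℓ ((0 : Fin n → ℝ), (1:ℝ)) := by
    rw [hsnd, ContinuousLinearMap.map_smul, smul_eq_mul]
  rw [hlast]
  rfl

lemma sep_point {f : (Fin n → ℝ) → EReal} (hclosed : IsClosed (epi n f))
    (hconv : Convex ℝ (epi n f)) {x₁ : Fin n → ℝ} {r₁ : ℝ} (hx₁ : f x₁ = (r₁ : EReal))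
    {p : (Fin n → ℝ) × ℝ} (hp : p ∉ epi n f) :
    ∃ (v : Fin n → ℝ) (s β : ℝ), 0 ≤ s ∧ p.1 ⬝ᵥ v + p.2 * s < β ∧
      ∀ z ∈ epi n f, β < z.1 ⬝ᵥ v + z.2 * s := by
  obtain ⟨ℓ, β, hpβ, hβ⟩ := geometric_hahn_banach_point_closed hconv hclosed hp
  obtain ⟨v, s, hvs⟩ := lin_decomp ℓ
  refine ⟨v, s, β, ?_, by rw [← hvs]; exact hpβ, fun z hz => by rw [← hvs]; exact hβ z hz⟩
  by_contra hs
  push_neg at hs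
  set m := max 0 ((β - x₁ ⬝ᵥ v - r₁ * s) / s) with hm
  have hm0 : 0 ≤ m := le_max_left _ _
  have hmem : (x₁, r₁ + m) ∈ epi n f := by
    simp only [epi, Set.mem_setOf_eq]
    rw [hx₁]
    exact_mod_cast (by linarith : r₁ ≤ r₁ + m)
  have h1 := hβ _ hmem
  rw [hvs] at h1
  simp only at h1
  have h2 : m * s ≤ (β - x₁ ⬝ᵥ v - r₁ * s) / s * s :=
    mul_le_mul_of_nonpos_right (le_max_right _ _) hs.le
  rw [div_mul_cancel₀ _ (ne_of_lt hs)] at h2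
  have h3 : (r₁ + m) * s = r₁ * s + m * s := by ring
  linarith

lemma sep_pos {f : (Fin n → ℝ) → EReal} (hbot : ∀ x, f x ≠ ⊥) {v : Fin n → ℝ} {s β : ℝ}
    (hs : 0 < s) (hsep : ∀ z ∈ epi n f, β < z.1 ⬝ᵥ v + z.2 * s) :
    conj n f ((-s⁻¹) • v) ≤ ((-β / s : ℝ) : EReal) := by
  apply iSup_le
  intro x'
  rcases ereal_cases (f x') with hg | ⟨r', hg⟩ | hg
  · exact absurd hg (hbot x')
  · rw [hg, ← EReal.coe_sub, EReal.coe_le_coe_iff]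
    have hmem : (x', r') ∈ epi n f := by simp only [epi, Set.mem_setOf_eq]; rw [hg]
    have h1 := hsep _ hmem
    simp only at h1
    have hd : x' ⬝ᵥ ((-s⁻¹) • v) = -s⁻¹ * (x' ⬝ᵥ v) := by
      rw [dotProduct_smul]; simp [smul_eq_mul]
    rw [hd, le_div_iff₀ hs]
    have hkey : (-s⁻¹ * (x' ⬝ᵥ v) - r') * s = -(x' ⬝ᵥ v) - r' * s := by
      field_simp
    rw [hkey]
    linarith
  · rw [hg]; simp

lemma exists_minorant {f : (Fin n → ℝ) → EReal} (hbot : ∀ x, f x ≠ ⊥)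
    (hclosed : IsClosed (epi n f)) (hconv : Convex ℝ (epi n f))
    {x₁ : Fin n → ℝ} {r₁ : ℝ} (hx₁ : f x₁ = (r₁ : EReal)) :
    ∃ (u₁ : Fin n → ℝ) (M : ℝ), conj n f u₁ ≤ (M : EReal) := by
  have hp : ((x₁, r₁ - 1) : (Fin n → ℝ) × ℝ) ∉ epi n f := by
    simp only [epi, Set.mem_setOf_eq]
    rw [hx₁]
    intro hcon
    rw [EReal.coe_le_coe_iff] at hcon
    linarith
  obtain ⟨v, s, β, hs0, hpt, hsep⟩ := sep_point hclosed hconv hx₁ hp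
  rcases lt_or_eq_of_le hs0 with hs | hs
  · exact ⟨_, _, sep_pos hbot hs hsep⟩
  · exfalso
    have h1 := hsep (x₁, r₁) (by simp only [epi, Set.mem_setOf_eq]; rw [hx₁])
    simp only at h1 hpt
    rw [← hs] at h1 hpt
    simp only [mul_zero, add_zero] at h1 hpt
    linarith

lemma biconj_le {f : (Fin n → ℝ) → EReal} (hbot : ∀ x, f x ≠ ⊥) (x : Fin n → ℝ) :
    conj n (conj n f) x ≤ f x := by
  apply iSup_le
  intro u
  rcases ereal_cases (f x) with hg | ⟨r, hg⟩ | hg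
  · exact absurd hg (hbot x)
  · have h1 : ((u ⬝ᵥ x - (x ⬝ᵥ u - r) : ℝ) : EReal) = ((r : ℝ) : EReal) := by
      rw [EReal.coe_eq_coe_iff, dotProduct_comm]
      ring
    rw [hg]
    calc ((u ⬝ᵥ x : ℝ) : EReal) - conj n f u
        ≤ ((u ⬝ᵥ x : ℝ) : EReal) - ((x ⬝ᵥ u - r : ℝ) : EReal) :=
          EReal.sub_le_sub le_rfl (FY hg u)
      _ = ((u ⬝ᵥ x - (x ⬝ᵥ u - r) : ℝ) : EReal) := (EReal.coe_sub _ _).symm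
      _ = ((r : ℝ) : EReal) := h1
  · rw [hg]; exact le_top

lemma fm {f : (Fin n → ℝ) → EReal} (hdom : ∃ x, f x ≠ ⊤) (hbot : ∀ x, f x ≠ ⊥)
    (hclosed : IsClosed (epi n f)) (hconv : Convex ℝ (epi n f)) :
    conj n (conj n f) = f := by
  obtain ⟨xd, hxd⟩ := hdom
  obtain ⟨r₁, hx₁⟩ := ereal_real (hbot xd) hxd
  funext x
  refine le_antisymm (biconj_le hbot x) ?_
  by_contra hcon
  push_neg at hcon
  obtain ⟨c, hc1, hc2⟩ := EReal.exists_between_coe_real hcon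
  have hp : ((x, c) : (Fin n → ℝ) × ℝ) ∉ epi n f := by
    simp only [epi, Set.mem_setOf_eq]
    exact not_le.2 hc2
  obtain ⟨v, s, β, hs0, hpt, hsep⟩ := sep_point hclosed hconv hx₁ hp
  simp only at hpt
  rcases lt_or_eq_of_le hs0 with hs | hs
  · have hcj := sep_pos hbot hs hsep
    have hterm := le_conj (n := n) (conj n f) ((-s⁻¹) • v) x
    have h2 : (((-s⁻¹) • v ⬝ᵥ x : ℝ) : EReal) - ((-β / s : ℝ) : EReal)
        ≤ (((-s⁻¹) • v ⬝ᵥ x : ℝ) : EReal) - conj n f ((-s⁻¹) • v) :=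
      EReal.sub_le_sub le_rfl hcj
    have h3 : (c : EReal) < (((-s⁻¹) • v ⬝ᵥ x - (-β / s) : ℝ) : EReal) := by
      rw [EReal.coe_lt_coe_iff]
      have hd : ((-s⁻¹) • v) ⬝ᵥ x = -s⁻¹ * (v ⬝ᵥ x) := by
        rw [smul_dotProduct]; simp [smul_eq_mul]
      rw [hd]
      refine (mul_lt_mul_iff_of_pos_right hs).1 ?_
      have hA : (-s⁻¹ * (v ⬝ᵥ x) - -β / s) * s = -(v ⬝ᵥ x) + β := by
        field_simp
        ring
      rw [hA]
      have hcomm : v ⬝ᵥ x = x ⬝ᵥ v := dotProduct_comm v x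
      linarith
    have h4 : (((-s⁻¹) • v ⬝ᵥ x - (-β / s) : ℝ) : EReal) ≤ conj n (conj n f) x := by
      rw [EReal.coe_sub]
      exact le_trans h2 hterm
    exact absurd (lt_trans (lt_of_lt_of_le h3 h4) hc1) (lt_irrefl _)
  · have hsep0 : ∀ z ∈ epi n f, β < z.1 ⬝ᵥ v := by
      intro z hz
      have h := hsep z hz
      rw [← hs] at h
      simpa using h
    have hpt0 : x ⬝ᵥ v < β := by
      rw [← hs] at hpt
      simpa using hpt
    obtain ⟨u₁, M, hM⟩ := exists_minorant hbot hclosed hconv hx₁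
    set t := max 1 ((c + 1 + M - x ⬝ᵥ u₁) / (β - x ⬝ᵥ v)) with ht
    have hβx : 0 < β - x ⬝ᵥ v := by linarith
    have ht0 : (0:ℝ) < t := lt_of_lt_of_le one_pos (le_max_left _ _)
    have htb : c + 1 + M - x ⬝ᵥ u₁ ≤ t * (β - x ⬝ᵥ v) := by
      have h5 : (c + 1 + M - x ⬝ᵥ u₁) / (β - x ⬝ᵥ v) * (β - x ⬝ᵥ v) ≤ t * (β - x ⬝ᵥ v) :=
        mul_le_mul_of_nonneg_right (le_max_right _ _) hβx.le
      rwa [div_mul_cancel₀ _ (ne_of_gt hβx)] at h5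
    have hconj : conj n f (u₁ - t • v) ≤ ((M - t * β : ℝ) : EReal) := by
      apply iSup_le
      intro x'
      rcases ereal_cases (f x') with hg | ⟨r', hg⟩ | hg
      · exact absurd hg (hbot x')
      · rw [hg, ← EReal.coe_sub, EReal.coe_le_coe_iff]
        have hm1 : ((x' ⬝ᵥ u₁ - r' : ℝ) : EReal) ≤ ((M : ℝ) : EReal) := le_trans (FY hg u₁) hM
        rw [EReal.coe_le_coe_iff] at hm1
        have hm2 := hsep0 (x', r') (by simp only [epi, Set.mem_setOf_eq]; rw [hg])
        simp only at hm2
        have hd : x' ⬝ᵥ (u₁ - t • v) = x' ⬝ᵥ u₁ - t * (x' ⬝ᵥ v) := by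
          rw [dotProduct_sub, dotProduct_smul]; simp [smul_eq_mul]
        rw [hd]
        have hmul : t * β ≤ t * (x' ⬝ᵥ v) := mul_le_mul_of_nonneg_left hm2.le ht0.le
        linarith
      · rw [hg]; simp
    have hterm := le_conj (n := n) (conj n f) (u₁ - t • v) x
    have h2 : ((u₁ - t • v) ⬝ᵥ x : ℝ) - ((M - t * β : ℝ) : EReal)
        ≤ (((u₁ - t • v) ⬝ᵥ x : ℝ) : EReal) - conj n f (u₁ - t • v) :=
      EReal.sub_le_sub le_rfl hconj
    have h3 : (c : EReal) < (((u₁ - t • v) ⬝ᵥ x - (M - t * β) : ℝ) : EReal) := by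
      rw [EReal.coe_lt_coe_iff]
      have hd : (u₁ - t • v) ⬝ᵥ x = x ⬝ᵥ u₁ - t * (x ⬝ᵥ v) := by
        rw [sub_dotProduct, smul_dotProduct, dotProduct_comm u₁ x, dotProduct_comm v x]
        simp [smul_eq_mul]
      rw [hd]
      have hexp : t * (β - x ⬝ᵥ v) = t * β - t * (x ⬝ᵥ v) := by ring
      linarith
    have h4 : (((u₁ - t • v) ⬝ᵥ x - (M - t * β) : ℝ) : EReal) ≤ conj n (conj n f) x := by
      rw [EReal.coe_sub]
      exact le_trans h2 hterm
    exact absurd (lt_trans (lt_of_lt_of_le h3 h4) hc1) (lt_irrefl _)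

end Stmt5Aux

namespace Stmt5Aux

variable {n : ℕ}

lemma ri_ext {S : Set (Fin n → ℝ)} {u₀ : Fin n → ℝ}
    (hu₀ : u₀ ∈ intrinsicInterior ℝ S) {u : Fin n → ℝ} (hu : u ∈ S) :
    ∃ w ∈ S, ∃ t : ℝ, 0 < t ∧ t < 1 ∧ u₀ = (1 - t) • u + t • w := by
  obtain ⟨y, hy, hyv⟩ := hu₀
  have hu₀S : u₀ ∈ S := by
    have := interior_subset hy
    simpa [hyv] using this
  have huA : u ∈ affineSpan ℝ S := subset_affineSpan ℝ S hu
  have hu₀A : u₀ ∈ affineSpan ℝ S := subset_affineSpan ℝ S hu₀S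
  set φ : ℝ → affineSpan ℝ S := fun ε =>
    ⟨AffineMap.lineMap u u₀ (1 + ε), AffineMap.lineMap_mem _ huA hu₀A⟩ with hφ
  have hφcont : Continuous φ := by
    apply Continuous.subtype_mk
    simp only [AffineMap.lineMap_apply_module']
    fun_prop
  have hopen : IsOpen (φ ⁻¹' interior (((↑) : affineSpan ℝ S → (Fin n → ℝ)) ⁻¹' S)) :=
    isOpen_interior.preimage hφcont
  have h0 : (0:ℝ) ∈ φ ⁻¹' interior (((↑) : affineSpan ℝ S → (Fin n → ℝ)) ⁻¹' S) := by
    have hφ0 : φ 0 = y := by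
      apply Subtype.ext
      show (AffineMap.lineMap u u₀ (1 + 0 : ℝ) : Fin n → ℝ) = ↑y
      rw [hyv, add_zero, AffineMap.lineMap_apply_one]
    rw [Set.mem_preimage, hφ0]
    exact hy
  obtain ⟨δ, hδ, hball⟩ := Metric.isOpen_iff.1 hopen 0 h0
  have hεmem : φ (δ/2) ∈ interior (((↑) : affineSpan ℝ S → (Fin n → ℝ)) ⁻¹' S) := by
    apply hball
    rw [Metric.mem_ball, Real.dist_eq, sub_zero, abs_of_pos (by linarith)]
    linarith
  set ε : ℝ := δ/2 with hε
  have hε0 : 0 < ε := by rw [hε]; linarith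
  have hne : (1:ℝ) + ε ≠ 0 := by positivity
  refine ⟨AffineMap.lineMap u u₀ (1 + ε), ?_, 1/(1+ε), by positivity, ?_, ?_⟩
  · have := interior_subset hεmem
    exact this
  · rw [div_lt_one (by positivity)]
    linarith
  · rw [AffineMap.lineMap_apply_module']
    match_scalars <;> field_simp <;> ring
end Stmt5Aux

namespace Stmt5Aux

variable {n : ℕ}

lemma key3 {g : (Fin n → ℝ) → EReal} {x x' : Fin n → ℝ} {r r' : ℝ}
    (hx : g x = (r : EReal)) (hx' : g x' = (r' : EReal))
    {u w u₀ : Fin n → ℝ} {t : ℝ} (ht0 : 0 < t) (ht1 : t < 1)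
    (hcomb : u₀ = (1 - t) • u + t • w)
    (hu : u ∈ subdiff n g x) (hw : w ∈ subdiff n g x) (hu₀x : u₀ ∈ subdiff n g x)
    (hu₀' : u₀ ∈ subdiff n g x') : u ∈ subdiff n g x' := by
  have hA := conj_eq_of_subdiff hx hu
  have hB := conj_eq_of_subdiff hx hw
  have hC := conj_eq_of_subdiff hx hu₀x
  have hC' := conj_eq_of_subdiff hx' hu₀'
  have hA' : x' ⬝ᵥ u - r' ≤ x ⬝ᵥ u - r := by
    have h := FY hx' u
    rw [hA, EReal.coe_le_coe_iff] at h
    exact h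
  have hB' : x' ⬝ᵥ w - r' ≤ x ⬝ᵥ w - r := by
    have h := FY hx' w
    rw [hB, EReal.coe_le_coe_iff] at h
    exact h
  have hCC : x ⬝ᵥ u₀ - r = x' ⬝ᵥ u₀ - r' := by
    rw [hC] at hC'
    exact EReal.coe_eq_coe_iff.1 hC'
  have hde : ∀ y : Fin n → ℝ, y ⬝ᵥ u₀ = (1 - t) * (y ⬝ᵥ u) + t * (y ⬝ᵥ w) := by
    intro y
    rw [hcomb, dotProduct_add, dotProduct_smul, dotProduct_smul]
    simp [smul_eq_mul]
  rw [hde, hde] at hCC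
  have hmulB : t * (x' ⬝ᵥ w - r') ≤ t * (x ⬝ᵥ w - r) := mul_le_mul_of_nonneg_left hB' ht0.le
  have hdiff : (x ⬝ᵥ u - r) - (x' ⬝ᵥ u - r') ≤ t * ((x ⬝ᵥ u - r) - (x' ⬝ᵥ u - r')) := by
    nlinarith [hmulB, hCC]
  have hD0 : 0 ≤ (x ⬝ᵥ u - r) - (x' ⬝ᵥ u - r') := by linarith
  have hle : (x ⬝ᵥ u - r) - (x' ⬝ᵥ u - r') ≤ 0 := by
    nlinarith [hdiff, (by linarith : (0:ℝ) < 1 - t)]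
  have hAA : x' ⬝ᵥ u - r' = x ⬝ᵥ u - r := by linarith
  apply subdiff_of_conj_eq hx'
  rw [hA]
  exact congrArg _ hAA.symm

lemma flip {f : (Fin n → ℝ) → EReal} (hfm : conj n (conj n f) = f)
    {x u : Fin n → ℝ} {r s : ℝ} (hx : f x = (r : EReal)) (hs : conj n f u = (s : EReal)) :
    u ∈ subdiff n f x ↔ x ∈ subdiff n (conj n f) u := by
  rw [subdiff_iff_conj hx, subdiff_iff_conj hs, hfm, hs, hx]
  constructor
  · intro h
    rw [EReal.coe_eq_coe_iff] at h ⊢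
    rw [dotProduct_comm u x]
    linarith
  · intro h
    rw [EReal.coe_eq_coe_iff] at h ⊢
    rw [dotProduct_comm u x] at h
    linarith

lemma part1 {f : (Fin n → ℝ) → EReal} (hfm : conj n (conj n f) = f)
    {Fs : Set ((Fin n → ℝ) × ℝ)} (hFs : IsKMinExpFace n (epi n (conj n f)) Fs) :
    IsKMinExpFace n (epi n f) (Psi n f Fs) ∧ PsiStar n f (Psi n f Fs) = Fs := by
  obtain ⟨xt, ut, st, hsu, hxt_sub, hFsE⟩ := char.1 hFs
  have hfxt : f xt = ((ut ⬝ᵥ xt - st : ℝ) : EReal) := by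
    have h := conj_eq_of_subdiff hsu hxt_sub
    rwa [hfm] at h
  set rt : ℝ := ut ⬝ᵥ xt - st with hrt
  set S := subdiff n f xt with hS
  have hUtS : ut ∈ S := (flip hfm hfxt hsu).2 hxt_sub
  have hSconv : Convex ℝ S := subdiff_convex hfxt
  obtain ⟨u₀, hu₀i⟩ := Set.Nonempty.intrinsicInterior hSconv ⟨ut, hUtS⟩
  have hu₀S : u₀ ∈ S := intrinsicInterior_subset hu₀i
  have hFsmem : ∀ q : (Fin n → ℝ) × ℝ, q ∈ Fs ↔ ((q.2 : EReal) = conj n f q.1 ∧ q.1 ∈ S) := by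
    intro q
    rw [hFsE]
    simp only [Set.mem_setOf_eq]
    constructor
    · rintro ⟨h1, h2⟩
      exact ⟨h1, (flip hfm hfxt h1.symm).2 h2⟩
    · rintro ⟨h1, h2⟩
      exact ⟨h1, (flip hfm hfxt h1.symm).1 h2⟩
  have hkey : ∀ u ∈ S, ∀ (x' : Fin n → ℝ) (r' : ℝ), f x' = (r' : EReal) →
      u₀ ∈ subdiff n f x' → u ∈ subdiff n f x' := by
    intro u huS x' r' hx' hu₀x'
    obtain ⟨w, hwS, t, ht0, ht1, hcomb⟩ := ri_ext hu₀i huS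
    exact key3 hfxt hx' ht0 ht1 hcomb huS hwS hu₀S hu₀x'
  have hconj₀ : conj n f u₀ = ((xt ⬝ᵥ u₀ - rt : ℝ) : EReal) := conj_eq_of_subdiff hfxt hu₀S
  have hPsi : Psi n f Fs
      = {p : (Fin n → ℝ) × ℝ | (p.2 : EReal) = f p.1 ∧ u₀ ∈ subdiff n f p.1} := by
    ext p
    simp only [Psi, Set.mem_iInter, Set.mem_setOf_eq, Set.mem_sep_iff]
    constructor
    · intro hp
      exact hp (u₀, xt ⬝ᵥ u₀ - rt) ⟨(hFsmem _).2 ⟨hconj₀.symm, hu₀S⟩, hconj₀.symm⟩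
    · rintro ⟨hp1, hp2⟩ q ⟨hqFs, hqconj⟩
      exact ⟨hp1, hkey q.1 ((hFsmem q).1 hqFs).2 p.1 p.2 hp1.symm hp2⟩
  have hface : IsKMinExpFace n (epi n f) (Psi n f Fs) := by
    rw [hPsi]
    exact char.2 ⟨u₀, xt, rt, hfxt, hu₀S, rfl⟩
  refine ⟨hface, ?_⟩
  rw [hPsi]
  ext q
  simp only [PsiStar, Set.mem_iInter, Set.mem_setOf_eq, Set.mem_sep_iff]
  constructor
  · intro hq
    obtain ⟨h1, h2⟩ := hq (xt, rt) ⟨⟨hfxt.symm, hu₀S⟩, hfxt.symm⟩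
    exact (hFsmem q).2 ⟨h1, h2⟩
  · rintro hqFs p ⟨⟨hp1, hp2⟩, -⟩
    obtain ⟨hqc, hqS⟩ := (hFsmem q).1 hqFs
    exact ⟨hqc, hkey q.1 hqS p.1 p.2 hp1.symm hp2⟩

lemma part2 {f : (Fin n → ℝ) → EReal} (hfm : conj n (conj n f) = f)
    {F : Set ((Fin n → ℝ) × ℝ)} (hF : IsKMinExpFace n (epi n f) F) :
    IsKMinExpFace n (epi n (conj n f)) (PsiStar n f F) ∧ Psi n f (PsiStar n f F) = F := by
  obtain ⟨u, x₀, r₀, hx₀, hux₀, hFE⟩ := char.1 hF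
  have hconju : conj n f u = ((x₀ ⬝ᵥ u - r₀ : ℝ) : EReal) := conj_eq_of_subdiff hx₀ hux₀
  set s₀ : ℝ := x₀ ⬝ᵥ u - r₀ with hs₀
  set T := subdiff n (conj n f) u with hT
  have hx₀T : x₀ ∈ T := (flip hfm hx₀ hconju).1 hux₀
  have hTconv : Convex ℝ T := subdiff_convex hconju
  obtain ⟨xt, hxti⟩ := Set.Nonempty.intrinsicInterior hTconv ⟨x₀, hx₀T⟩
  have hxtT : xt ∈ T := intrinsicInterior_subset hxti
  have hfxt : f xt = ((u ⬝ᵥ xt - s₀ : ℝ) : EReal) := by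
    have h := conj_eq_of_subdiff hconju hxtT
    rwa [hfm] at h
  set rt : ℝ := u ⬝ᵥ xt - s₀ with hrt
  have hFmem : ∀ p : (Fin n → ℝ) × ℝ, p ∈ F ↔ ((p.2 : EReal) = f p.1 ∧ p.1 ∈ T) := by
    intro p
    rw [hFE]
    simp only [Set.mem_setOf_eq]
    constructor
    · rintro ⟨h1, h2⟩
      exact ⟨h1, (flip hfm h1.symm hconju).1 h2⟩
    · rintro ⟨h1, h2⟩
      exact ⟨h1, (flip hfm h1.symm hconju).2 h2⟩
  have hkey : ∀ x' ∈ T, ∀ (v : Fin n → ℝ) (s' : ℝ), conj n f v = (s' : EReal) →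
      xt ∈ subdiff n (conj n f) v → x' ∈ subdiff n (conj n f) v := by
    intro x' hx'T v s' hv hxtv
    obtain ⟨w, hwT, t, ht0, ht1, hcomb⟩ := ri_ext hxti hx'T
    exact key3 hconju hv ht0 ht1 hcomb hx'T hwT hxtT hxtv
  have hPsiStar : PsiStar n f F
      = {q : (Fin n → ℝ) × ℝ | (q.2 : EReal) = conj n f q.1 ∧ xt ∈ subdiff n (conj n f) q.1} := by
    ext q
    simp only [PsiStar, Set.mem_iInter, Set.mem_setOf_eq, Set.mem_sep_iff]
    constructor
    · intro hq
      obtain ⟨h1, h2⟩ := hq (xt, rt) ⟨(hFmem _).2 ⟨hfxt.symm, hxtT⟩, hfxt.symm⟩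
      exact ⟨h1, (flip hfm hfxt h1.symm).1 h2⟩
    · rintro ⟨hq1, hq2⟩ p ⟨hpF, hpg⟩
      obtain ⟨h1, hpT⟩ := (hFmem p).1 hpF
      exact ⟨hq1, (flip hfm h1.symm hq1.symm).2 (hkey p.1 hpT q.1 q.2 hq1.symm hq2)⟩
  have hface : IsKMinExpFace n (epi n (conj n f)) (PsiStar n f F) := by
    rw [hPsiStar]
    exact char.2 ⟨xt, u, s₀, hconju, hxtT, rfl⟩
  refine ⟨hface, ?_⟩
  rw [hPsiStar]
  ext p
  simp only [Psi, Set.mem_iInter, Set.mem_setOf_eq, Set.mem_sep_iff]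
  constructor
  · intro hp
    obtain ⟨h1, h2⟩ := hp (u, s₀) ⟨⟨hconju.symm, hxtT⟩, hconju.symm⟩
    exact (hFmem p).2 ⟨h1, (flip hfm h1.symm hconju).1 h2⟩
  · intro hpF q hq
    obtain ⟨⟨hq1, hq2⟩, -⟩ := hq
    obtain ⟨h1, hpT⟩ := (hFmem p).1 hpF
    exact ⟨h1, (flip hfm h1.symm hq1.symm).2 (hkey p.1 hpT q.1 q.2 hq1.symm hq2)⟩

end Stmt5Aux


/-- Ψ is an inclusion-reversing one-to-one mapping between the
K-minimal exposed faces of epi f* and those of epi f, with inverse Ψ*. -/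
theorem stmt5 (n : ℕ) (f : (Fin n → ℝ) → EReal)
    (hdom : ∃ x, f x ≠ ⊤) (hbot : ∀ x, f x ≠ ⊥)
    (hclosed : IsClosed (epi n f)) (hconv : Convex ℝ (epi n f)) :
    (∀ Fs : Set ((Fin n → ℝ) × ℝ), IsKMinExpFace n (epi n (conj n f)) Fs →
        IsKMinExpFace n (epi n f) (Psi n f Fs) ∧ PsiStar n f (Psi n f Fs) = Fs) ∧
    (∀ F : Set ((Fin n → ℝ) × ℝ), IsKMinExpFace n (epi n f) F →
        IsKMinExpFace n (epi n (conj n f)) (PsiStar n f F) ∧ Psi n f (PsiStar n f F) = F) ∧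
    (∀ Fs₁ Fs₂ : Set ((Fin n → ℝ) × ℝ), IsKMinExpFace n (epi n (conj n f)) Fs₁ →
        IsKMinExpFace n (epi n (conj n f)) Fs₂ → Fs₁ ⊆ Fs₂ →
        Psi n f Fs₂ ⊆ Psi n f Fs₁) := by
  have hfm := Stmt5Aux.fm hdom hbot hclosed hconv
  refine ⟨fun Fs hFs => Stmt5Aux.part1 hfm hFs, fun F hF => Stmt5Aux.part2 hfm hF, ?_⟩
  intro Fs₁ Fs₂ _ _ hsub p hp
  simp only [Psi, Set.mem_iInter, Set.mem_sep_iff] at hp ⊢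
  intro q hq
  exact hp q ⟨hsub hq.1, hq.2⟩
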